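/- Let m be a nonzero integer. Every binary quadratic form over ℤ[1/m] of discriminant 1 − 4m is SL₂(ℤ[1/m])-equivalent to a form all of whose coefficients lie in the image of ℤ in ℤ[1/m]. -/

import Mathlib

/-- A binary quadratic form `a x² + b x y + c y²` over a commutative ring. -/
structure BQF (R : Type*) [CommRing R] where
  a : R
  b : R
  c : R

namespace BQF

variable {R S : Type*} [CommRing R] [CommRing S]

/-- The discriminant `b² - 4ac`. -/
def disc (Q : BQF R) : R := Q.b ^ 2 - 4 * Q.a * Q.c

/-- The action of `g ∈ SL₂(R)` on forms, `(g · Q)(v) = Q(g · v)`: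
the coefficients are obtained by expanding `Q (g₀₀ x + g₀₁ y, g₁₀ x + g₁₁ y)`. -/
def act (g : Matrix.SpecialLinearGroup (Fin 2) R) (Q : BQF R) : BQF R where
  a := Q.a * g.1 0 0 ^ 2 + Q.b * g.1 0 0 * g.1 1 0 + Q.c * g.1 1 0 ^ 2
  b := 2 * Q.a * g.1 0 0 * g.1 0 1 + Q.b * (g.1 0 0 * g.1 1 1 + g.1 0 1 * g.1 1 0)
        + 2 * Q.c * g.1 1 0 * g.1 1 1
  c := Q.a * g.1 0 1 ^ 2 + Q.b * g.1 0 1 * g.1 1 1 + Q.c * g.1 1 1 ^ 2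

/-- Two forms are `SL₂(R)`-equivalent if they are in the same orbit. -/
def Equiv (Q₁ Q₂ : BQF R) : Prop := ∃ g, act g Q₁ = Q₂

/-- Base change of a binary quadratic form along a ring homomorphism. -/
def map (f : R →+* S) (Q : BQF R) : BQF S := ⟨f Q.a, f Q.b, f Q.c⟩

theorem disc_map (f : R →+* S) (Q : BQF R) : (Q.map f).disc = f Q.disc := by
  simp [disc, map, map_sub, map_mul, map_pow, map_ofNat]

end BQF

/-- The number of `SL₂(R)`-equivalence classes of binary quadratic forms over `R`
of discriminant `D`. -/
noncomputable def classCount (R : Type*) [CommRing R] (D : R) : ℕ :=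
  Nat.card (Quot (fun Q₁ Q₂ : {Q : BQF R // Q.disc = D} => BQF.Equiv Q₁.1 Q₂.1))

namespace BQF
variable {R : Type*} [CommRing R]

theorem act_mul' (g h : Matrix.SpecialLinearGroup (Fin 2) R) (Q : BQF R) :
    act (g * h) Q = act h (act g Q) := by
  simp only [act, Matrix.SpecialLinearGroup.coe_mul, Matrix.mul_apply, Fin.sum_univ_two,
    BQF.mk.injEq]
  refine ⟨by ring, by ring, by ring⟩

theorem equiv_trans' {Q₁ Q₂ Q₃ : BQF R} (h1 : Equiv Q₁ Q₂) (h2 : Equiv Q₂ Q₃) : Equiv Q₁ Q₃ := by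
  obtain ⟨g, rfl⟩ := h1
  obtain ⟨h, rfl⟩ := h2
  exact ⟨g * h, act_mul' g h Q₁⟩

theorem disc_act' (g : Matrix.SpecialLinearGroup (Fin 2) R) (Q : BQF R) :
    (act g Q).disc = Q.disc := by
  have hdet : g.1 0 0 * g.1 1 1 - g.1 0 1 * g.1 1 0 = 1 := by
    have h2 := g.2
    rw [Matrix.det_fin_two] at h2
    exact h2
  simp only [act, disc]
  linear_combination (Q.b^2 - 4*Q.a*Q.c) * (g.1 0 0 * g.1 1 1 - g.1 0 1 * g.1 1 0 + 1) * hdet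

end BQF

lemma nat_pow_dvd_of_sq' (n N : ℕ) (k : ℕ) (h : n ^ (2*k) ∣ N^2) (hN : N ≠ 0) : n ^ k ∣ N := by
  rcases eq_or_ne n 0 with rfl | hn
  · rcases Nat.eq_zero_or_pos k with rfl | hk
    · simp
    · rw [zero_pow (by omega)] at h
      rw [zero_pow (by omega)]
      simpa [pow_eq_zero_iff] using h
  · rw [← Nat.factorization_le_iff_dvd (pow_ne_zero _ hn) hN]
    rw [← Nat.factorization_le_iff_dvd (pow_ne_zero _ hn) (pow_ne_zero _ hN)] at h
    intro p
    have hp := h p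
    simp only [Nat.factorization_pow, Finsupp.smul_apply, smul_eq_mul] at hp ⊢
    have h2 : 2*k * n.factorization p = 2*(k * n.factorization p) := by ring
    omega

lemma nat_pow_dvd_of_dvd_mul' (n a M : ℕ) (ha : a ≠ 0) (j : ℕ)
    (h : n ^ (j + a) ∣ a * M) (hM : M ≠ 0) : n ^ j ∣ M := by
  rcases eq_or_ne n 0 with rfl | hn
  · rcases Nat.eq_zero_or_pos j with rfl | hj
    · simp
    · rw [zero_pow (by omega)] at h
      exfalso; exact (by positivity : a * M ≠ 0) (Nat.eq_zero_of_zero_dvd h)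
  · rw [← Nat.factorization_le_iff_dvd (pow_ne_zero _ hn) hM]
    rw [← Nat.factorization_le_iff_dvd (pow_ne_zero _ hn) (by positivity)] at h
    intro p
    have hp := h p
    have hfa : a.factorization p < a := Nat.factorization_lt _ ha
    rw [Nat.factorization_mul ha hM] at hp
    simp only [Nat.factorization_pow, Finsupp.smul_apply, smul_eq_mul, Finsupp.add_apply] at hp ⊢
    rcases Nat.eq_zero_or_pos (n.factorization p) with h0 | h0
    · simp [h0]
    · have hexp : (j + a) * n.factorization p = j * n.factorization p + a * n.factorization p := by
        ring
      have h3 : a ≤ a * n.factorization p := Nat.le_mul_of_pos_right _ h0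
      omega

lemma int_pow_dvd_of_sq' (m N : ℤ) (k : ℕ) (h : m ^ (2*k) ∣ N^2) : m ^ k ∣ N := by
  rcases eq_or_ne N 0 with rfl | hN
  · simp
  · have h' : m.natAbs ^ (2*k) ∣ N.natAbs ^ 2 := by
      rw [← Int.natAbs_pow, ← Int.natAbs_pow]
      exact Int.natAbs_dvd_natAbs.mpr h
    have h2 := nat_pow_dvd_of_sq' m.natAbs N.natAbs k h' (Int.natAbs_ne_zero.mpr hN)
    rw [← Int.natAbs_dvd_natAbs, Int.natAbs_pow]
    exact h2

lemma int_pow_dvd_of_dvd_mul' (m A M : ℤ) (hA : A ≠ 0) (j : ℕ)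
    (h : m ^ (j + A.natAbs) ∣ A * M) : m ^ j ∣ M := by
  rcases eq_or_ne M 0 with rfl | hM
  · simp
  · have h' : m.natAbs ^ (j + A.natAbs) ∣ A.natAbs * M.natAbs := by
      rw [← Int.natAbs_pow, ← Int.natAbs_mul]
      exact Int.natAbs_dvd_natAbs.mpr h
    have h2 := nat_pow_dvd_of_dvd_mul' m.natAbs A.natAbs M.natAbs
      (Int.natAbs_ne_zero.mpr hA) j h' (Int.natAbs_ne_zero.mpr hM)
    rw [← Int.natAbs_dvd_natAbs, Int.natAbs_pow]
    exact h2

lemma sqrt_approx' (m : ℤ) : ∀ N : ℕ, ∃ w : ℤ, m ^ N ∣ (w^2 - w + m) := by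
  intro N
  induction N with
  | zero => exact ⟨0, by simp⟩
  | succ N ih =>
    rcases Nat.eq_zero_or_pos N with rfl | hN
    · exact ⟨0, by simp⟩
    obtain ⟨w, e, he⟩ := ih
    have hcop : IsCoprime (2*w - 1) m := by
      have h1 : IsCoprime (1 - 4*m) m := ⟨1, 4, by ring⟩
      have h2 : IsCoprime ((2*w-1)^2) m := by
        have hm : m ^ N = m * m ^ (N-1) := by
          rw [← pow_succ']; congr 1; omega
        have h3 : (2*w-1)^2 = (1 - 4*m) + m * (4 * (m ^ (N-1) * e)) := by
          rw [hm] at he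
          linear_combination 4 * he
        rw [h3]
        exact h1.add_mul_left_left _
      exact (IsCoprime.pow_left_iff (by norm_num)).mp h2
    obtain ⟨u, v, huv⟩ := hcop
    refine ⟨w + m^N * (-e*u), e*v + m^(2*N - (N+1)) * (-e*u)^2, ?_⟩
    have hNN2 : m ^ N * m ^ N = m ^ (N+1) * m ^ (2*N - (N+1)) := by
      rw [← pow_add, ← pow_add]; congr 1; omega
    have hsucc : m ^ (N+1) = m ^ N * m := pow_succ m N
    linear_combination he + (-(m^N*e)) * huv + ((-e*u)^2) * hNN2 + (e*v) * hsucc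

theorem key_lemma (m : ℤ) (hm : m ≠ 0) (Q : BQF (Localization.Away m))
    (ha : Q.a ≠ 0)
    (hQ : Q.disc = algebraMap ℤ (Localization.Away m) (1 - 4 * m)) :
    ∃ Q' : BQF (Localization.Away m), BQF.Equiv Q Q' ∧
      ∃ a b c : ℤ,
        Q'.a = algebraMap ℤ (Localization.Away m) a ∧
        Q'.b = algebraMap ℤ (Localization.Away m) b ∧
        Q'.c = algebraMap ℤ (Localization.Away m) c := by
  have hinj : Function.Injective (algebraMap ℤ (Localization.Away m)) :=
    IsLocalization.injective _ (powers_le_nonZeroDivisors_of_noZeroDivisors hm)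
  haveI hdom : IsDomain (Localization.Away m) :=
    IsLocalization.isDomain_of_le_nonZeroDivisors _
      (powers_le_nonZeroDivisors_of_noZeroDivisors hm)
  have hmunit : ∀ k : ℕ, IsUnit (algebraMap ℤ (Localization.Away m) (m^k)) := fun k => by
    simpa [map_pow] using
      (IsLocalization.map_units (Localization.Away m)
        (⟨m, Submonoid.mem_powers m⟩ : Submonoid.powers m)).pow k
  have cancel : ∀ (j : ℕ) (x : Localization.Away m) (X : ℤ),
      x * (algebraMap ℤ _ m)^j = algebraMap ℤ _ (m^j * X) → x = algebraMap ℤ _ X := by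
    intro j x X h
    apply (hmunit j).mul_left_cancel
    rw [mul_comm (algebraMap ℤ _ (m^j)) x, map_pow, h, map_mul, map_pow]
  have numer : ∀ x : Localization.Away m, ∃ (r : ℕ) (X : ℤ),
      x * algebraMap ℤ _ (m^r) = algebraMap ℤ _ X := by
    intro x
    obtain ⟨⟨X, s⟩, h⟩ := IsLocalization.surj (M := Submonoid.powers m) x
    obtain ⟨r, hr⟩ := s.2
    simp only at hr h
    exact ⟨r, X, by rw [hr]; exact h⟩
  -- common denominator
  obtain ⟨r₁, A₀, hA₀⟩ := numer Q.a
  obtain ⟨r₂, B₀, hB₀⟩ := numer Q.b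
  obtain ⟨r₃, C₀, hC₀⟩ := numer Q.c
  set k := r₁ + r₂ + r₃ with hk
  have hA : Q.a * algebraMap ℤ _ (m^k) = algebraMap ℤ _ (A₀ * m^(r₂+r₃)) := by
    rw [hk, show m^(r₁+r₂+r₃) = m^r₁ * m^(r₂+r₃) by rw [← pow_add]; congr 1; omega, map_mul, map_mul,
      ← mul_assoc, hA₀]
  have hB : Q.b * algebraMap ℤ _ (m^k) = algebraMap ℤ _ (B₀ * m^(r₁+r₃)) := by
    rw [hk, show m^(r₁+r₂+r₃) = m^r₂ * m^(r₁+r₃) by rw [← pow_add]; congr 1; omega, map_mul,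
      map_mul, ← mul_assoc, hB₀]
  have hC : Q.c * algebraMap ℤ _ (m^k) = algebraMap ℤ _ (C₀ * m^(r₁+r₂)) := by
    rw [hk, show m^(r₁+r₂+r₃) = m^r₃ * m^(r₁+r₂) by rw [← pow_add]; congr 1; omega, map_mul,
      map_mul, ← mul_assoc, hC₀]
  set A := A₀ * m^(r₂+r₃) with hAdef
  set B := B₀ * m^(r₁+r₃) with hBdef
  set C := C₀ * m^(r₁+r₂) with hCdef
  clear_value k A B C
  clear hA₀ hB₀ hC₀ hk hAdef hBdef hCdef
  rw [map_pow] at hA hB hC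
  -- A ≠ 0
  have hAne : A ≠ 0 := by
    intro h
    apply ha
    have h2 : Q.a * (algebraMap ℤ _ m)^k = 0 := by rw [hA, h, map_zero]
    rcases mul_eq_zero.mp h2 with h' | h'
    · exact h'
    · exact absurd h' (by rw [← map_pow]; exact (hmunit k).ne_zero)
  -- R1
  have R1 : B^2 - 4*A*C = (m^k)^2 * (1 - 4*m) := by
    apply hinj
    have expand : algebraMap ℤ (Localization.Away m) (B^2 - 4*A*C)
        = Q.disc * ((algebraMap ℤ _ m)^k)^2 := by
      simp only [map_sub, map_mul, map_pow, map_ofNat]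
      rw [← hA, ← hB, ← hC, BQF.disc]
      ring
    rw [expand, hQ]
    simp only [map_mul, map_pow, map_sub, map_one, map_ofNat]
    ring
  -- square root of 1-4m to precision m^N
  set N := k + 1 + A.natAbs with hN
  obtain ⟨w, e, he⟩ := sqrt_approx' m N
  -- s := 1 - 2w,  s^2 - (1-4m) = 4 m^N e
  have R2 : (1-2*w)^2 - (1 - 4*m) = 4*(m^N*e) := by linear_combination 4 * he
  -- the vector (X, Y), its gcd, and the reduced coprime vector (X', Y')
  set X := (1-2*w)*m^k - B with hX
  set Y := 2*A with hY
  have hYne : Y ≠ 0 := by simp [hY, hAne]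
  have hgcd : (0:ℕ) < Int.gcd X Y := Int.gcd_pos_of_ne_zero_right X hYne
  set d : ℤ := (Int.gcd X Y : ℤ) with hd
  have hdne : d ≠ 0 := by rw [hd]; exact_mod_cast hgcd.ne'
  obtain ⟨X', hX'⟩ : d ∣ X := Int.gcd_dvd_left X Y
  obtain ⟨Y', hY'⟩ : d ∣ Y := Int.gcd_dvd_right X Y
  have hcopXY : IsCoprime X' Y' := by
    rw [Int.isCoprime_iff_gcd_eq_one]
    have h1 : X' = X / d := by rw [hX']; rw [Int.mul_ediv_cancel_left _ hdne]
    have h2 : Y' = Y / d := by rw [hY']; rw [Int.mul_ediv_cancel_left _ hdne]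
    rw [h1, h2, hd]
    exact Int.gcd_div_gcd_div_gcd hgcd
  obtain ⟨u, v, huv⟩ := hcopXY
  -- first transformation
  set g₁ : Matrix.SpecialLinearGroup (Fin 2) (Localization.Away m) :=
    ⟨!![algebraMap ℤ _ X', algebraMap ℤ _ (-v); algebraMap ℤ _ Y', algebraMap ℤ _ u], by
      rw [Matrix.det_fin_two_of, ← map_mul, ← map_mul, ← map_sub,
        show X' * u - (-v) * Y' = 1 by linear_combination huv, map_one]⟩ with hg₁
  have e00 : g₁.1 0 0 = algebraMap ℤ _ X' := by simp [hg₁]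
  have e01 : g₁.1 0 1 = algebraMap ℤ _ (-v) := by simp [hg₁]
  have e10 : g₁.1 1 0 = algebraMap ℤ _ Y' := by simp [hg₁]
  have e11 : g₁.1 1 1 = algebraMap ℤ _ u := by simp [hg₁]
  set Q₁ := BQF.act g₁ Q with hQ₁
  set M₁ := A*X'^2 + B*(X'*Y') + C*Y'^2 with hM₁def
  set N₁ := 2*A*(X'*(-v)) + B*(X'*u + (-v)*Y') + 2*C*(Y'*u) with hN₁def
  set C₁ := A*(-v)^2 + B*((-v)*u) + C*u^2 with hC₁def
  have hM₁ : Q₁.a * (algebraMap ℤ _ m)^k = algebraMap ℤ _ M₁ := by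
    rw [hQ₁]
    show (Q.a * g₁.1 0 0 ^ 2 + Q.b * g₁.1 0 0 * g₁.1 1 0 + Q.c * g₁.1 1 0 ^ 2)
        * (algebraMap ℤ _ m)^k = _
    rw [e00, e10, hM₁def]
    simp only [map_add, map_mul, map_pow, map_neg, map_ofNat]
    linear_combination ((algebraMap ℤ (Localization.Away m) X')^2) * hA
      + ((algebraMap ℤ (Localization.Away m) X') * (algebraMap ℤ (Localization.Away m) Y')) * hB
      + ((algebraMap ℤ (Localization.Away m) Y')^2) * hC
  have hN₁ : Q₁.b * (algebraMap ℤ _ m)^k = algebraMap ℤ _ N₁ := by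
    rw [hQ₁]
    show (2 * Q.a * g₁.1 0 0 * g₁.1 0 1 + Q.b * (g₁.1 0 0 * g₁.1 1 1 + g₁.1 0 1 * g₁.1 1 0)
        + 2 * Q.c * g₁.1 1 0 * g₁.1 1 1) * (algebraMap ℤ _ m)^k = _
    rw [e00, e01, e10, e11, hN₁def]
    simp only [map_add, map_mul, map_pow, map_neg, map_ofNat]
    linear_combination (2 * (algebraMap ℤ (Localization.Away m) X')
        * (-(algebraMap ℤ (Localization.Away m) v))) * hA
      + ((algebraMap ℤ (Localization.Away m) X') * (algebraMap ℤ (Localization.Away m) u)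
        + (-(algebraMap ℤ (Localization.Away m) v)) * (algebraMap ℤ (Localization.Away m) Y')) * hB
      + (2 * (algebraMap ℤ (Localization.Away m) Y') * (algebraMap ℤ (Localization.Away m) u)) * hC
  have hC₁ : Q₁.c * (algebraMap ℤ _ m)^k = algebraMap ℤ _ C₁ := by
    rw [hQ₁]
    show (Q.a * g₁.1 0 1 ^ 2 + Q.b * g₁.1 0 1 * g₁.1 1 1 + Q.c * g₁.1 1 1 ^ 2)
        * (algebraMap ℤ _ m)^k = _
    rw [e01, e11, hC₁def]
    simp only [map_add, map_mul, map_pow, map_neg, map_ofNat]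
    linear_combination ((-(algebraMap ℤ (Localization.Away m) v))^2) * hA
      + ((-(algebraMap ℤ (Localization.Away m) v)) * (algebraMap ℤ (Localization.Away m) u)) * hB
      + ((algebraMap ℤ (Localization.Away m) u)^2) * hC
  -- integer identities
  have E : (d*d) * M₁ = (m^k)^2 * (4*(A*(m^N*e))) := by
    have E2 : (d*d) * M₁ = A*X^2 + B*(X*Y) + C*Y^2 := by
      rw [hM₁def, hX', hY']; ring
    have E1 : A*X^2 + B*(X*Y) + C*Y^2 = (m^k)^2 * (4*(A*(m^N*e))) := by
      rw [hX, hY]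
      linear_combination (-A) * R1 + (A*((m^k)^2)) * R2
    exact E2.trans E1
  have hya : d * Y' = 2*A := by rw [← hY', hY]
  have R5 : A * M₁ = (Y'*Y') * ((m^k)^2 * (m^N * e)) := by
    have h4 : (4*A) * (A * M₁) = (4*A) * ((Y'*Y') * ((m^k)^2 * (m^N*e))) := by
      linear_combination (Y'*Y') * E + (-(M₁*(d*Y' + 2*A))) * hya
    exact mul_left_cancel₀ (mul_ne_zero four_ne_zero hAne) h4
  have hdvdAM : m^(2*k+N) ∣ A * M₁ := by
    refine ⟨(Y'*Y')*e, ?_⟩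
    have hsq : (m:ℤ)^(2*k+N) = (m^k)^2 * m^N := by
      rw [show 2*k+N = k*2+N by omega, pow_add, pow_mul]
    rw [R5, hsq]
    ring
  have hdvdM₁ : m^(3*k+1) ∣ M₁ := by
    apply int_pow_dvd_of_dvd_mul' m A M₁ hAne
    rw [show 3*k+1 + A.natAbs = 2*k+N by rw [hN]; omega]
    exact hdvdAM
  obtain ⟨A₁, hA₁⟩ : (m:ℤ)^k ∣ M₁ := dvd_trans (pow_dvd_pow m (by omega)) hdvdM₁
  have hQ₁a : Q₁.a = algebraMap ℤ _ A₁ :=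
    cancel k Q₁.a A₁ (hM₁.trans (congrArg _ hA₁))
  obtain ⟨q, hq⟩ : (m:ℤ)^(2*k+1) ∣ A₁ := by
    obtain ⟨t₀, ht₀⟩ := hdvdM₁
    refine ⟨t₀, mul_left_cancel₀ (pow_ne_zero k hm) ?_⟩
    rw [← hA₁, ht₀, show 3*k+1 = k + (2*k+1) by omega, pow_add]
    ring
  -- disc relation for Q₁
  have hdisc₁ : Q₁.disc = algebraMap ℤ _ (1 - 4*m) := by
    rw [hQ₁, BQF.disc_act']; exact hQ
  have R6 : N₁^2 - 4*(M₁*C₁) = (m^k)^2*(1-4*m) := by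
    apply hinj
    have expand : algebraMap ℤ (Localization.Away m) (N₁^2 - 4*(M₁*C₁))
        = Q₁.disc * ((algebraMap ℤ _ m)^k)^2 := by
      simp only [map_sub, map_mul, map_pow, map_ofNat]
      rw [← hM₁, ← hN₁, ← hC₁, BQF.disc]
      ring
    rw [expand, hdisc₁]
    simp only [map_mul, map_pow, map_sub, map_one, map_ofNat]
    ring
  have hdvdN₁ : (m:ℤ)^k ∣ N₁ := by
    apply int_pow_dvd_of_sq' m N₁ k
    obtain ⟨M₁', hM₁'⟩ : (m:ℤ)^(2*k) ∣ M₁ :=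
      dvd_trans (pow_dvd_pow m (show 2*k ≤ 3*k+1 by omega)) hdvdM₁
    refine ⟨(1-4*m) + 4*(M₁'*C₁), ?_⟩
    have hpow2 : ((m:ℤ)^k)^2 = m^(2*k) := by rw [← pow_mul, Nat.mul_comm]
    linear_combination R6 + 4*C₁*hM₁' + ((1-4*m)) * hpow2
  obtain ⟨B₁, hB₁⟩ := hdvdN₁
  have hQ₁b : Q₁.b = algebraMap ℤ _ B₁ :=
    cancel k Q₁.b B₁ (hN₁.trans (congrArg _ hB₁))
  -- B₁ is coprime to m
  have R7 : B₁^2 = (1-4*m) + m*(4*(m^k*(q*C₁))) := by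
    have hp4 : (m:ℤ)^(2*k+1) = m^k * (m^k * m) := by
      rw [show 2*k+1 = k+(k+1) by omega, pow_add, pow_add, pow_one]
    have expand : ((m:ℤ)^k)^2 * (B₁^2) = ((m:ℤ)^k)^2 * ((1-4*m) + m*(4*(m^k*(q*C₁)))) := by
      linear_combination R6 + (-(N₁ + m^k*B₁))*hB₁ + (4*C₁)*hA₁ + (4*C₁*m^k)*hq
        + (4*C₁*m^k*q)*hp4
    exact mul_left_cancel₀ (pow_ne_zero _ (pow_ne_zero _ hm)) expand
  have hcopB : IsCoprime B₁ m := by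
    have h1 : IsCoprime (1-4*m) m := ⟨1, 4, by ring⟩
    have h2 : IsCoprime (B₁^2) m := by rw [R7]; exact h1.add_mul_left_left _
    exact (IsCoprime.pow_left_iff (by norm_num)).mp h2
  obtain ⟨V, z, hVz⟩ := hcopB.pow_right (n := 2*k+1)
  -- second transformation
  set τ : ℤ := -(C₁ * V) with hτ
  set t : Localization.Away m := algebraMap ℤ _ τ * ↑(hmunit k).unit⁻¹ with htdef
  have ht : t * (algebraMap ℤ _ m)^k = algebraMap ℤ _ τ := by
    rw [htdef, mul_assoc, ← map_pow]
    rw [IsUnit.val_inv_mul]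
    rw [mul_one]
  set g₂ : Matrix.SpecialLinearGroup (Fin 2) (Localization.Away m) :=
    ⟨!![1, t; 0, 1], by rw [Matrix.det_fin_two_of]; ring⟩ with hg₂
  have f00 : g₂.1 0 0 = 1 := by simp [hg₂]
  have f01 : g₂.1 0 1 = t := by simp [hg₂]
  have f10 : g₂.1 1 0 = 0 := by simp [hg₂]
  have f11 : g₂.1 1 1 = 1 := by simp [hg₂]
  set Q₂ := BQF.act g₂ Q₁ with hQ₂
  -- a coefficient
  have hQ₂a : Q₂.a = algebraMap ℤ _ A₁ := by
    rw [hQ₂]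
    show Q₁.a * g₂.1 0 0 ^ 2 + Q₁.b * g₂.1 0 0 * g₂.1 1 0 + Q₁.c * g₂.1 1 0 ^ 2 = _
    rw [f00, f10, hQ₁a]
    ring
  -- b coefficient
  have hAt : algebraMap ℤ (Localization.Away m) A₁ * t = algebraMap ℤ _ (m^(k+1)*(q*τ)) := by
    have hsplit : (m:ℤ)^(2*k+1) = m^(k+1) * m^k := by
      rw [← pow_add]; congr 1; omega
    calc algebraMap ℤ (Localization.Away m) A₁ * t
        = algebraMap ℤ _ (m^(k+1)*q) * (t * (algebraMap ℤ _ m)^k) := by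
          rw [hq, hsplit]
          simp only [map_mul, map_pow]
          ring
      _ = algebraMap ℤ _ (m^(k+1)*q) * algebraMap ℤ _ τ := by rw [ht]
      _ = algebraMap ℤ _ (m^(k+1)*(q*τ)) := by rw [← map_mul]; congr 1; ring
  have hQ₂b : Q₂.b = algebraMap ℤ _ (2*(m^(k+1)*(q*τ)) + B₁) := by
    rw [hQ₂]
    show 2 * Q₁.a * g₂.1 0 0 * g₂.1 0 1 + Q₁.b * (g₂.1 0 0 * g₂.1 1 1 + g₂.1 0 1 * g₂.1 1 0)
        + 2 * Q₁.c * g₂.1 1 0 * g₂.1 1 1 = _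
    rw [f00, f01, f10, f11, hQ₁a, hQ₁b]
    rw [map_add, map_mul, ← hAt]
    simp only [map_ofNat]
    ring
  -- c coefficient
  set C₂ : ℤ := m*(q*τ^2) + m^(k+1)*(C₁*z) with hC₂def
  have hintc : A₁*τ^2 + m^k*(B₁*τ + C₁) = m^(2*k) * C₂ := by
    have hp1 : (m:ℤ)^(2*k+1) = m^(2*k)*m := pow_succ m (2*k)
    have hp2 : (m:ℤ)^k*m^(2*k+1) = m^(2*k)*m^(k+1) := by
      rw [← pow_add, ← pow_add]; congr 1; omega
    rw [hq, hτ, hC₂def]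
    linear_combination (-(m^k*C₁))*hVz + (q*(-(C₁*V))^2)*hp1 + (C₁*z)*hp2
  have hQ₂c : Q₂.c = algebraMap ℤ _ C₂ := by
    apply cancel (2*k)
    have hsq : ((algebraMap ℤ (Localization.Away m)) m)^(2*k)
        = (algebraMap ℤ _ m)^k * (algebraMap ℤ _ m)^k := by
      rw [← pow_add]; congr 1; omega
    have step : Q₂.c * (algebraMap ℤ _ m)^(2*k)
        = algebraMap ℤ _ (A₁*τ^2 + m^k*(B₁*τ + C₁)) := by
      rw [hQ₂]
      show (Q₁.a * g₂.1 0 1 ^ 2 + Q₁.b * g₂.1 0 1 * g₂.1 1 1 + Q₁.c * g₂.1 1 1 ^ 2)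
          * (algebraMap ℤ _ m)^(2*k) = _
      rw [f01, f11, hQ₁a, hQ₁b, hsq]
      simp only [map_add, map_mul, map_pow, map_neg]
      linear_combination (algebraMap ℤ (Localization.Away m) A₁
          * (t * (algebraMap ℤ _ m)^k + algebraMap ℤ _ τ)
          + algebraMap ℤ _ B₁ * (algebraMap ℤ _ m)^k) * ht
        + (algebraMap ℤ _ m)^k * hC₁
    rw [step, hintc]
  exact ⟨Q₂, BQF.equiv_trans' ⟨g₁, hQ₁.symm⟩ ⟨g₂, hQ₂.symm⟩, A₁, 2*(m^(k+1)*(q*τ)) + B₁, C₂,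
    hQ₂a, hQ₂b, hQ₂c⟩


/-- Every binary quadratic form over `ℤ[1/m]` of discriminant `1 - 4m` is
`SL₂(ℤ[1/m])`-equivalent to a form whose coefficients all lie in the image of `ℤ`. -/
theorem equivalent_to_integral_form (m : ℤ) (hm : m ≠ 0)
    (Q : BQF (Localization.Away m))
    (hQ : Q.disc = algebraMap ℤ (Localization.Away m) (1 - 4 * m)) :
    ∃ Q' : BQF (Localization.Away m), BQF.Equiv Q Q' ∧
      ∃ a b c : ℤ,
        Q'.a = algebraMap ℤ (Localization.Away m) a ∧
        Q'.b = algebraMap ℤ (Localization.Away m) b ∧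
        Q'.c = algebraMap ℤ (Localization.Away m) c := by
  have hinj : Function.Injective (algebraMap ℤ (Localization.Away m)) :=
    IsLocalization.injective _ (powers_le_nonZeroDivisors_of_noZeroDivisors hm)
  haveI hdom : IsDomain (Localization.Away m) :=
    IsLocalization.isDomain_of_le_nonZeroDivisors _
      (powers_le_nonZeroDivisors_of_noZeroDivisors hm)
  by_cases h0 : Q.a ≠ 0
  · exact key_lemma m hm Q h0 hQ
  push_neg at h0
  -- find a preliminary transformation making the `a`-coefficient nonzero
  have hD : algebraMap ℤ (Localization.Away m) (1 - 4*m) ≠ 0 := by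
    intro h
    have : (1 - 4*m : ℤ) = 0 := hinj (by simpa using h)
    omega
  obtain ⟨t, ht⟩ : ∃ t : ℤ, Q.a + Q.b * algebraMap ℤ _ t + Q.c * (algebraMap ℤ _ t)^2 ≠ 0 := by
    by_contra hcon
    push_neg at hcon
    have h1 := hcon 1
    have h2 := hcon 2
    simp only [map_one, map_ofNat, h0] at h1 h2
    have h2R : (2 : Localization.Away m) ≠ 0 := by
      intro h
      have : ((2:ℤ)) = 0 := hinj (by rw [map_ofNat, map_zero]; exact h)
      omega
    have hc : Q.c = 0 := by
      have hcc : (2 : Localization.Away m) * Q.c = 0 := by linear_combination h2 - 2 * h1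
      rcases mul_eq_zero.mp hcc with h | h
      · exact absurd h h2R
      · exact h
    have hb : Q.b = 0 := by linear_combination h1 - hc
    rw [BQF.disc, h0, hb, hc] at hQ
    apply hD
    rw [← hQ]
    ring
  set g₀ : Matrix.SpecialLinearGroup (Fin 2) (Localization.Away m) :=
    ⟨!![1, 0; algebraMap ℤ _ t, 1], by simp [Matrix.det_fin_two]⟩ with hg₀
  have hact : (BQF.act g₀ Q).a ≠ 0 := by
    simpa [BQF.act, hg₀] using ht
  obtain ⟨Q', hequiv, hint⟩ := key_lemma m hm (BQF.act g₀ Q) hact (by rw [BQF.disc_act']; exact hQ)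
  exact ⟨Q', BQF.equiv_trans' ⟨g₀, rfl⟩ hequiv, hint⟩
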